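/- Let d ≥ 1 and 0 < s < 2 with s < d. Then there exists a constant C > 0 such that for all β > 0 and k_* > 0: ∫_0^∞ β r^{s−1} / (4 + (β²/4)(r² − k_*²)²) dr ≤ C (1 + β k_*²) / (β k_*^{4−s}). -/

import Mathlib

open Real MeasureTheory

set_option maxHeartbeats 2000000

lemma lorentz_int (c k : ℝ) (hc : 0 < c) :
    Integrable (fun x : ℝ => (4 + c^2*(x-k)^2)⁻¹) := by
  have h1 : Integrable (fun x : ℝ => (1 + x^2)⁻¹) := integrable_inv_one_add_sq
  have h2 : Integrable (fun x : ℝ => (1 + ((c/2)*x)^2)⁻¹) := h1.comp_mul_left' (by positivity)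
  have h3 : Integrable (fun x : ℝ => (1 + ((c/2)*(x-k))^2)⁻¹) := h2.comp_sub_right k
  have h4 := (h3.const_mul (1/4 : ℝ))
  refine h4.congr (ae_of_all _ fun x => ?_)
  simp only
  have : (4 : ℝ) + c^2*(x-k)^2 = 4 * (1 + ((c/2)*(x-k))^2) := by ring
  rw [this]
  field_simp

lemma lorentz_val (c k : ℝ) (hc : 0 < c) :
    ∫ x : ℝ, (4 + c^2*(x-k)^2)⁻¹ = π / (2*c) := by
  have e : (fun x : ℝ => (4 + c^2*(x-k)^2)⁻¹)
      = fun x : ℝ => (1/4) * (1 + ((c/2)*(x-k))^2)⁻¹ := by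
    funext x
    have : (4 : ℝ) + c^2*(x-k)^2 = 4 * (1 + ((c/2)*(x-k))^2) := by ring
    rw [this]; field_simp
  rw [e, integral_const_mul]
  have e2 : ∫ x : ℝ, (1 + ((c/2)*(x-k))^2)⁻¹ = ∫ x : ℝ, (1 + ((c/2)*x)^2)⁻¹ :=
    integral_sub_right_eq_self (fun x => (1 + ((c/2)*x)^2)⁻¹) k
  rw [e2, Measure.integral_comp_mul_left (fun y : ℝ => (1 + y^2)⁻¹) (c/2),
    integral_univ_inv_one_add_sq]
  rw [abs_of_pos (by positivity)]
  simp only [smul_eq_mul]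
  field_simp
  ring

/-- For `0 < s < 2` with `s < d`, there is `C > 0` such that for all `β > 0` and
`k_* > 0`, `∫_0^∞ β r^(s-1)/(4 + (β²/4)(r² - k_*²)²) dr ≤ C(1 + β k_*²)/(β k_*^(4-s))`. -/
theorem radial_integral_bound
    (d : ℕ) (hd : 1 ≤ d) (s : ℝ) (hs0 : 0 < s) (hs2 : s < 2) (hsd : s < d) :
    ∃ C : ℝ, 0 < C ∧
      ∀ β kstar : ℝ, 0 < β → 0 < kstar →
        (∫ r in Set.Ioi (0 : ℝ),
            β * r ^ (s - 1) / (4 + β ^ 2 / 4 * (r ^ 2 - kstar ^ 2) ^ 2))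
          ≤ C * (1 + β * kstar ^ 2) / (β * kstar ^ (4 - s)) := by
  have h4s : (0:ℝ) < 4 - s := by linarith
  have hQ : (0:ℝ) < (2:ℝ)^s := rpow_pos_of_pos two_pos s
  refine ⟨64 / (9*s*(2:ℝ)^s) + 4*(2:ℝ)^s/(9*(4-s)) + 2*π,
    by positivity, ?_⟩
  intro β k hβ hk
  obtain ⟨Q, hQdef⟩ : ∃ Q : ℝ, Q = (2:ℝ)^s := ⟨_, rfl⟩
  have hQ' : 0 < Q := hQdef ▸ hQ
  -- the three bounding functions
  obtain ⟨t1, ht1def⟩ : ∃ t1 : ℝ → ℝ,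
      t1 = fun r => (64/(9*β*k^4)) * Set.indicator (Set.Ioc 0 (k/2)) (fun r => r^(s-1)) r :=
    ⟨_, rfl⟩
  obtain ⟨t2, ht2def⟩ : ∃ t2 : ℝ → ℝ,
      t2 = fun r => (2*β*k^(s-1)) * (4 + (β*k/2)^2*(r-k)^2)⁻¹ := ⟨_, rfl⟩
  obtain ⟨t3, ht3def⟩ : ∃ t3 : ℝ → ℝ,
      t3 = fun r => (64/(9*β)) * Set.indicator (Set.Ioi (2*k)) (fun r => r^(s-5)) r := ⟨_, rfl⟩
  -- nonnegativity of the three pieces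
  have ht1nn : ∀ r, 0 ≤ t1 r := by
    intro r
    rw [ht1def]
    refine mul_nonneg (by positivity) (Set.indicator_nonneg (fun x hx => ?_) r)
    exact rpow_nonneg hx.1.le _
  have ht2nn : ∀ r, 0 ≤ t2 r := by
    intro r
    rw [ht2def]
    have hkp : (0:ℝ) ≤ k^(s-1) := rpow_nonneg hk.le _
    positivity
  have ht3nn : ∀ r, 0 ≤ t3 r := by
    intro r
    rw [ht3def]
    refine mul_nonneg (by positivity) (Set.indicator_nonneg (fun x hx => ?_) r)
    exact rpow_nonneg (le_trans (by positivity) (le_of_lt hx)) _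
  -- pointwise bound on (0, ∞)
  have hbound : ∀ r ∈ Set.Ioi (0:ℝ),
      β * r ^ (s - 1) / (4 + β ^ 2 / 4 * (r ^ 2 - k ^ 2) ^ 2) ≤ t1 r + t2 r + t3 r := by
    intro r hr
    have hrp : (0:ℝ) < r := hr
    have hnum : (0:ℝ) ≤ β * r^(s-1) := mul_nonneg hβ.le (rpow_nonneg hrp.le _)
    rcases le_or_gt r (k/2) with h1 | h1
    · -- small r
      have h9 : 9*β^2*k^4/64 ≤ 4 + β^2/4*(r^2-k^2)^2 := by
        have hr2 : r^2 ≤ k^2/4 := by nlinarith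
        have h34 : 3*k^2/4 ≤ k^2 - r^2 := by linarith
        have hsq : (3*k^2/4)^2 ≤ (k^2 - r^2)^2 := pow_le_pow_left₀ (by positivity) h34 2
        nlinarith [mul_le_mul_of_nonneg_left hsq (show (0:ℝ) ≤ β^2/4 by positivity)]
      have key : β * r ^ (s - 1) / (4 + β ^ 2 / 4 * (r ^ 2 - k ^ 2) ^ 2) ≤ t1 r := by
        rw [ht1def]
        simp only
        rw [Set.indicator_of_mem (Set.mem_Ioc.2 ⟨hrp, h1⟩)]
        calc β * r^(s-1) / (4 + β^2/4*(r^2-k^2)^2) ≤ β * r^(s-1) / (9*β^2*k^4/64) :=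
              div_le_div_of_nonneg_left hnum (by positivity) h9
          _ = 64/(9*β*k^4) * r^(s-1) := by field_simp
      linarith [ht2nn r, ht3nn r]
    · rcases le_or_gt r (2*k) with h2 | h2
      · -- middle r
        have hnum2 : r^(s-1) ≤ 2*k^(s-1) := by
          rcases le_or_gt 1 s with hs1 | hs1
          · calc r^(s-1) ≤ (2*k)^(s-1) := rpow_le_rpow hrp.le h2 (by linarith)
              _ = (2:ℝ)^(s-1) * k^(s-1) := mul_rpow (by norm_num) hk.le
              _ ≤ 2 * k^(s-1) := by
                have h21 : (2:ℝ)^(s-1) ≤ (2:ℝ)^(1:ℝ) :=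
                  rpow_le_rpow_of_exponent_le (by norm_num) (by linarith)
                rw [rpow_one] at h21
                exact mul_le_mul_of_nonneg_right h21 (rpow_nonneg hk.le _)
          · calc r^(s-1) ≤ (k/2)^(s-1) :=
                  rpow_le_rpow_of_nonpos (by positivity) h1.le (by linarith)
              _ = k^(s-1) * ((2:ℝ)^(s-1))⁻¹ := by
                  rw [div_rpow hk.le (by norm_num), div_eq_mul_inv]
              _ = (2:ℝ)^(1-s) * k^(s-1) := by
                  rw [← rpow_neg (by norm_num : (0:ℝ) ≤ 2), neg_sub]; ring
              _ ≤ 2 * k^(s-1) := by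
                have h21 : (2:ℝ)^(1-s) ≤ (2:ℝ)^(1:ℝ) :=
                  rpow_le_rpow_of_exponent_le (by norm_num) (by linarith)
                rw [rpow_one] at h21
                exact mul_le_mul_of_nonneg_right h21 (rpow_nonneg hk.le _)
        have hden2 : 4 + (β*k/2)^2*(r-k)^2 ≤ 4 + β^2/4*(r^2-k^2)^2 := by
          nlinarith [mul_nonneg (sq_nonneg (β*(r-k))) (sq_nonneg r),
            mul_nonneg (mul_nonneg (sq_nonneg (β*(r-k))) hrp.le) hk.le]
        have key : β * r ^ (s - 1) / (4 + β ^ 2 / 4 * (r ^ 2 - k ^ 2) ^ 2) ≤ t2 r := by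
          rw [ht2def]
          simp only
          rw [mul_comm (2*β*k^(s-1)), ← div_eq_inv_mul]
          refine div_le_div₀ (mul_nonneg (by positivity) (rpow_nonneg hk.le _)) ?_ (by positivity) hden2
          calc β * r^(s-1) ≤ β * (2*k^(s-1)) := mul_le_mul_of_nonneg_left hnum2 hβ.le
            _ = 2*β*k^(s-1) := by ring
        linarith [ht1nn r, ht3nn r]
      · -- large r
        have h9 : 9*β^2*r^4/64 ≤ 4 + β^2/4*(r^2-k^2)^2 := by
          have hk2 : k^2 ≤ r^2/4 := by nlinarith
          have h34 : 3*r^2/4 ≤ r^2 - k^2 := by linarith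
          have hsq : (3*r^2/4)^2 ≤ (r^2 - k^2)^2 := pow_le_pow_left₀ (by positivity) h34 2
          nlinarith [mul_le_mul_of_nonneg_left hsq (show (0:ℝ) ≤ β^2/4 by positivity)]
        have hsplit : r^(s-1) = r^(s-5) * r^4 := by
          rw [← rpow_natCast r 4, ← rpow_add hrp]
          congr 1; ring
        have key : β * r ^ (s - 1) / (4 + β ^ 2 / 4 * (r ^ 2 - k ^ 2) ^ 2) ≤ t3 r := by
          rw [ht3def]
          simp only
          rw [Set.indicator_of_mem (Set.mem_Ioi.2 h2)]
          calc β * r^(s-1) / (4 + β^2/4*(r^2-k^2)^2) ≤ β * r^(s-1) / (9*β^2*r^4/64) :=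
                div_le_div_of_nonneg_left hnum (by positivity) h9
            _ = 64/(9*β) * r^(s-5) := by
                rw [hsplit]; field_simp
        linarith [ht1nn r, ht2nn r]
  -- integrability
  have hint1 : Integrable ((Set.Ioc (0:ℝ) (k/2)).indicator fun r => r^(s-1)) := by
    rw [integrable_indicator_iff measurableSet_Ioc]
    have h := intervalIntegral.intervalIntegrable_rpow' (a := 0) (b := k/2) (show (-1:ℝ) < s-1 by linarith)
    rwa [intervalIntegrable_iff_integrableOn_Ioc_of_le (by positivity)] at h
  have hint2 : Integrable (fun r : ℝ => (4 + (β*k/2)^2*(r-k)^2)⁻¹) :=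
    lorentz_int (β*k/2) k (by positivity)
  have hint3on : IntegrableOn (fun r : ℝ => r^(s-5)) (Set.Ioi (2*k)) :=
    integrableOn_Ioi_rpow_of_lt (by linarith) (by positivity)
  have hint3 : Integrable ((Set.Ioi (2*k)).indicator fun r => r^(s-5)) := by
    rw [integrable_indicator_iff measurableSet_Ioi]; exact hint3on

  -- the comparison
  have hGi1 : Integrable t1 (volume.restrict (Set.Ioi (0:ℝ))) := by
    rw [ht1def]; exact ((hint1.const_mul _).restrict (s := Set.Ioi 0))
  have hGi2 : Integrable t2 (volume.restrict (Set.Ioi (0:ℝ))) := by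
    rw [ht2def]; exact ((hint2.const_mul _).restrict (s := Set.Ioi 0))
  have hGi3 : Integrable t3 (volume.restrict (Set.Ioi (0:ℝ))) := by
    rw [ht3def]; exact ((hint3.const_mul _).restrict (s := Set.Ioi 0))
  have hGi12 : Integrable (fun r => t1 r + t2 r) (volume.restrict (Set.Ioi (0:ℝ))) :=
    hGi1.add hGi2
  have hG : Integrable (fun r => t1 r + t2 r + t3 r) (volume.restrict (Set.Ioi (0:ℝ))) :=
    hGi12.add hGi3
  have hmono : (∫ r in Set.Ioi (0:ℝ),
      β * r ^ (s - 1) / (4 + β ^ 2 / 4 * (r ^ 2 - k ^ 2) ^ 2))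
      ≤ ∫ r in Set.Ioi (0:ℝ), (t1 r + t2 r + t3 r) := by
    refine integral_mono_of_nonneg ?_ hG ?_
    · refine (ae_restrict_iff' measurableSet_Ioi).2 (ae_of_all _ fun r hr => ?_)
      exact div_nonneg (mul_nonneg hβ.le (rpow_nonneg (le_of_lt hr) _)) (by positivity)
    · exact (ae_restrict_iff' measurableSet_Ioi).2 (ae_of_all _ hbound)
  -- computing / bounding the three integrals
  have hI1 : ∫ r in Set.Ioi (0:ℝ), t1 r = (64/(9*β*k^4)) * ((k/2)^s/s) := by
    rw [ht1def]
    rw [integral_const_mul]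
    congr 1
    rw [integral_indicator measurableSet_Ioc, Measure.restrict_restrict measurableSet_Ioc]
    have : Set.Ioc (0:ℝ) (k/2) ∩ Set.Ioi 0 = Set.Ioc 0 (k/2) := by
      rw [Set.inter_eq_left]
      exact fun x hx => hx.1
    rw [this, ← intervalIntegral.integral_of_le (by positivity : (0:ℝ) ≤ k/2),
      integral_rpow (Or.inl (by linarith : (-1:ℝ) < s-1))]
    have hs' : s - 1 + 1 = s := by ring
    rw [hs', zero_rpow hs0.ne']
    ring
  have hI2 : ∫ r in Set.Ioi (0:ℝ), t2 r ≤ (2*β*k^(s-1)) * (π/(β*k)) := by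
    rw [ht2def]
    rw [integral_const_mul]
    have hle : ∫ r in Set.Ioi (0:ℝ), (4 + (β*k/2)^2*(r-k)^2)⁻¹
        ≤ ∫ r : ℝ, (4 + (β*k/2)^2*(r-k)^2)⁻¹ :=
      setIntegral_le_integral hint2 (ae_of_all _ fun x => by positivity)
    have hval : ∫ r : ℝ, (4 + (β*k/2)^2*(r-k)^2)⁻¹ = π/(β*k) := by
      rw [lorentz_val (β*k/2) k (by positivity)]
      congr 1; ring
    refine mul_le_mul_of_nonneg_left ?_ (mul_nonneg (by positivity) (rpow_nonneg hk.le _))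
    rw [← hval]; exact hle
  have hI3 : ∫ r in Set.Ioi (0:ℝ), t3 r = (64/(9*β)) * ((2*k)^(s-4)/(4-s)) := by
    rw [ht3def]
    rw [integral_const_mul]
    congr 1
    rw [integral_indicator measurableSet_Ioi, Measure.restrict_restrict measurableSet_Ioi]
    have : Set.Ioi (2*k) ∩ Set.Ioi 0 = Set.Ioi (2*k) := by
      rw [Set.inter_eq_left]
      exact fun x hx => lt_trans (show (0:ℝ) < 2*k by positivity) hx
    rw [this, integral_Ioi_rpow_of_lt (by linarith : s-5 < -1) (by positivity)]
    have hs' : s - 5 + 1 = s - 4 := by ring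
    have hs4 : s - (4:ℝ) ≠ 0 := sub_ne_zero.mpr (by linarith)
    rw [hs']
    field_simp
    ring
  -- split the integral of the sum
  have hsum : ∫ r in Set.Ioi (0:ℝ), (t1 r + t2 r + t3 r)
      = (∫ r in Set.Ioi (0:ℝ), t1 r) + (∫ r in Set.Ioi (0:ℝ), t2 r)
        + (∫ r in Set.Ioi (0:ℝ), t3 r) := by
    rw [integral_add hGi12 hGi3, integral_add hGi1 hGi2]
  -- rpow bookkeeping
  obtain ⟨P, hPdef⟩ : ∃ P : ℝ, P = k^(s-4) := ⟨_, rfl⟩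
  have hP : 0 < P := hPdef ▸ rpow_pos_of_pos hk _
  have hks : k^s = P * k^4 := by
    rw [hPdef, ← rpow_natCast k 4, ← rpow_add hk]
    congr 1; ring
  have hks1 : k^(s-1) = P * k^3 := by
    rw [hPdef, ← rpow_natCast k 3, ← rpow_add hk]
    congr 1; ring
  have h24 : (2:ℝ)^(4:ℝ) = 16 := by
    rw [show (4:ℝ) = ((4:ℕ):ℝ) by norm_num, rpow_natCast]; norm_num
  have hk2s : (2*k)^(s-4) = (Q/16) * P := by
    rw [mul_rpow (by norm_num) hk.le, hPdef]
    congr 1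
    rw [hQdef, ← h24, ← rpow_sub two_pos]
  have hkhalf : (k/2)^s = P * k^4 / Q := by
    rw [div_rpow hk.le (by norm_num), hks, hQdef]
  have hk4s : k^(4-s) = P⁻¹ := by
    rw [hPdef, ← rpow_neg hk.le]
    congr 1; ring
  -- final arithmetic
  have hβ0 : β ≠ 0 := hβ.ne'
  have hk0 : k ≠ 0 := hk.ne'
  have hQ0 : Q ≠ 0 := hQ'.ne'
  have hs0' : s ≠ 0 := hs0.ne'
  have hP0 : P ≠ 0 := hP.ne'
  have h4s0 : (4:ℝ) - s ≠ 0 := h4s.ne'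
  rw [hk4s, ← hQdef]
  have hval1 : (64/(9*β*k^4)) * ((k/2)^s/s) = 64/(9*s*Q) * (P/β) := by
    rw [hkhalf]
    field_simp
  have hval2 : (2*β*k^(s-1)) * (π/(β*k)) = 2*π*(β*k^2) * (P/β) := by
    rw [hks1]
    field_simp
  have hval3 : (64/(9*β)) * ((2*k)^(s-4)/(4-s)) = 4*Q/(9*(4-s)) * (P/β) := by
    rw [hk2s]
    field_simp
    ring
  have hfinal : 64/(9*s*Q) * (P/β) + 2*π*(β*k^2) * (P/β) + 4*Q/(9*(4-s)) * (P/β)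
      ≤ (64 / (9*s*Q) + 4*Q/(9*(4-s)) + 2*π) * (1 + β*k^2) / (β * P⁻¹) := by
    have hPb : (0:ℝ) < P/β := by positivity
    have hrw : (64 / (9*s*Q) + 4*Q/(9*(4-s)) + 2*π) * (1 + β*k^2) / (β * P⁻¹)
        = (64 / (9*s*Q) + 4*Q/(9*(4-s)) + 2*π) * (1 + β*k^2) * (P/β) := by
      field_simp
    rw [hrw]
    have ha1 : (0:ℝ) < 64/(9*s*Q) := by positivity
    have ha3 : (0:ℝ) < 4*Q/(9*(4-s)) := by positivity
    have hbk : (0:ℝ) < β*k^2 := by positivity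
    nlinarith [mul_pos ha1 hbk, mul_pos ha3 hbk, mul_pos pi_pos hbk,
      mul_pos (mul_pos ha1 hbk) hPb, mul_pos (mul_pos ha3 hbk) hPb,
      mul_pos pi_pos hPb, mul_pos ha1 hPb, mul_pos ha3 hPb]
  calc (∫ r in Set.Ioi (0:ℝ), β * r ^ (s - 1) / (4 + β ^ 2 / 4 * (r ^ 2 - k ^ 2) ^ 2))
      ≤ ∫ r in Set.Ioi (0:ℝ), (t1 r + t2 r + t3 r) := hmono
    _ = (∫ r in Set.Ioi (0:ℝ), t1 r) + (∫ r in Set.Ioi (0:ℝ), t2 r)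
        + (∫ r in Set.Ioi (0:ℝ), t3 r) := hsum
    _ ≤ (64/(9*β*k^4)) * ((k/2)^s/s) + (2*β*k^(s-1)) * (π/(β*k))
        + (64/(9*β)) * ((2*k)^(s-4)/(4-s)) := by
        rw [hI1, hI3]; linarith [hI2]
    _ = 64/(9*s*Q) * (P/β) + 2*π*(β*k^2) * (P/β) + 4*Q/(9*(4-s)) * (P/β) := by
        rw [hval1, hval2, hval3]
    _ ≤ (64 / (9*s*Q) + 4*Q/(9*(4-s)) + 2*π) * (1 + β*k^2) / (β * P⁻¹) := hfinal
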